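/- Let H be a real separable Hilbert space, I=[0,T] with T>0, 𝒜 : H → H satisfying (H_𝒜²) (Lipschitz with constant M>0), and C : I × H ⇉ H with nonempty closed values satisfying (H₁) (with constants κ_r and L ≥ 0). Let x₀ ∈ H with 𝒜(x₀) ∈ C(0,x₀). Then for all t ∈ I, x ∈ H, and every w ∈ 𝒜(x) − cl co Proj_{C(t,x)}(𝒜(x)), one has ‖w‖ ≤ (M+L)‖x − x₀‖ + κ_r·t, where r := max{‖𝒜(x)‖, ‖𝒜(x₀)‖} and κ_r is the constant given by (H₁). -/

import Mathlib

open Metric Set MeasureTheory Filter Pointwise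

noncomputable section

variable {H : Type} [NormedAddCommGroup H] [InnerProductSpace ℝ H]

/-- The Clarke generalized directional derivative of `f` at `x` in direction `h`. -/
def clarkeDeriv (f : H → ℝ) (x h : H) : ℝ :=
  Filter.limsup (fun p : H × ℝ => (f (p.1 + p.2 • h) - f p.1) / p.2)
    ((nhds x) ×ˢ (nhdsWithin 0 (Ioi (0:ℝ))))

/-- The Clarke subdifferential of `f` at `x`. -/
def clarkeSubdiff (f : H → ℝ) (x : H) : Set H :=
  {v : H | ∀ h : H, (inner ℝ v h : ℝ) ≤ clarkeDeriv f x h}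

/-- The closure of a set with respect to the weak topology of `H`. -/
def weakClosure (A : Set H) : Set H :=
  (toWeakSpace ℝ H) ⁻¹' (closure ((toWeakSpace ℝ H) '' A))

/-- The Clarke normal cone to `S` at `x`: the weak closure of `ℝ₊ ∂d_S(x)`. -/
def clarkeNormalCone (S : Set H) (x : H) : Set H :=
  weakClosure {w : H | ∃ l : ℝ, ∃ v ∈ clarkeSubdiff (fun u => infDist u S) x,
    0 ≤ l ∧ w = l • v}

/-- The (possibly empty) set of nearest points of `x` in `S`. -/
def projSet (S : Set H) (x : H) : Set H :=
  {y ∈ S | ‖x - y‖ = infDist x S}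

/-- A family of closed sets is equi-uniformly subsmooth. -/
def EquiUniformlySubsmooth {ι : Sort*} (S : ι → Set H) : Prop :=
  ∀ ε > (0:ℝ), ∃ δ > (0:ℝ), ∀ j : ι, ∀ x₁ ∈ S j, ∀ x₂ ∈ S j, ‖x₁ - x₂‖ < δ →
    ∀ v₁ ∈ clarkeNormalCone (S j) x₁ ∩ closedBall 0 1,
    ∀ v₂ ∈ clarkeNormalCone (S j) x₂ ∩ closedBall 0 1,
      -ε * ‖x₁ - x₂‖ ≤ (inner ℝ (v₁ - v₂) (x₁ - x₂) : ℝ)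

/-- The Hausdorff measure of non-compactness of a set. -/
def hausMNC (A : Set H) : ℝ :=
  sInf {r : ℝ | 0 < r ∧ ∃ F : Finset H, A ⊆ ⋃ c ∈ F, closedBall c r}

/-- `v` is the derivative of the absolutely continuous function `x` on `[0,T]`. -/
def IsACDerivOn {E : Type} [NormedAddCommGroup E] [NormedSpace ℝ E] (T : ℝ)
    (x v : ℝ → E) : Prop :=
  IntegrableOn v (Icc 0 T) volume ∧ ∀ t ∈ Icc 0 T, x t = x 0 + ∫ s in (0:ℝ)..t, v s

/-- Proposition 4.1(v): norm bound for `G(t,x) = 𝒜(x) − cl co Proj_{C(t,x)}(𝒜(x))`. -/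
theorem norm_bound_G
    {H : Type} [NormedAddCommGroup H] [InnerProductSpace ℝ H] [CompleteSpace H]
    [TopologicalSpace.SeparableSpace H]
    (T : ℝ) (hT : 0 < T)
    (A : H → H) (M : ℝ) (hM : 0 < M)
    -- (H_𝒜²): Lipschitz continuity
    (hA2 : ∀ x y : H, ‖A x - A y‖ ≤ M * ‖x - y‖)
    (C : ℝ → H → Set H)
    (hC : ∀ t ∈ Icc (0:ℝ) T, ∀ x : H, (C t x).Nonempty ∧ IsClosed (C t x))
    -- (H₁): truncated-Hausdorff Lipschitz condition
    (L : ℝ) (hL0 : 0 ≤ L) (κ : ℝ → ℝ)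
    (hH1 : ∀ r : ℝ, 0 ≤ r → 0 ≤ κ r ∧
      ∀ s ∈ Icc (0:ℝ) T, ∀ t ∈ Icc (0:ℝ) T, ∀ x y : H, ∀ z ∈ closedBall (0:H) r,
        |infDist z (C t x) - infDist z (C s y)| ≤ κ r * |t - s| + L * ‖x - y‖)
    (x₀ : H) (hx₀ : A x₀ ∈ C 0 x₀) :
    ∀ t ∈ Icc (0:ℝ) T, ∀ x : H,
      ∀ w ∈ ({A x} - closure (convexHull ℝ (projSet (C t x) (A x))) : Set H),
        ‖w‖ ≤ (M + L) * ‖x - x₀‖ + κ (max ‖A x‖ ‖A x₀‖) * t := by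
  intro t ht x w hw
  rw [Set.mem_sub] at hw
  obtain ⟨a, ha, y, hy, rfl⟩ := hw
  rw [Set.mem_singleton_iff] at ha
  subst ha
  set d := infDist (A x) (C t x) with hd
  have hsub : closure (convexHull ℝ (projSet (C t x) (A x))) ⊆ closedBall (A x) d := by
    apply closure_minimal _ Metric.isClosed_closedBall
    apply convexHull_min _ (convex_closedBall _ _)
    intro z hz
    rw [mem_closedBall, dist_comm, dist_eq_norm]
    exact le_of_eq hz.2
  have hyd : ‖A x - y‖ ≤ d := by
    have := hsub hy
    rwa [mem_closedBall, dist_comm, dist_eq_norm] at this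
  set r := max ‖A x‖ ‖A x₀‖ with hr
  have hr0 : 0 ≤ r := le_max_of_le_left (norm_nonneg _)
  obtain ⟨hκ0, hH⟩ := hH1 r hr0
  have hzr : A x ∈ closedBall (0:H) r := by
    rw [mem_closedBall, dist_zero_right]
    exact le_max_left _ _
  have h0T : (0:ℝ) ∈ Icc (0:ℝ) T := ⟨le_refl _, hT.le⟩
  have habs := hH 0 h0T t ht x x₀ (A x) hzr
  have ht0 : 0 ≤ t := ht.1
  rw [sub_zero, abs_of_nonneg ht0] at habs
  have h1 : d - infDist (A x) (C 0 x₀) ≤ κ r * t + L * ‖x - x₀‖ :=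
    (abs_le.mp habs).2
  have h2 : infDist (A x) (C 0 x₀) ≤ M * ‖x - x₀‖ := by
    calc infDist (A x) (C 0 x₀) ≤ dist (A x) (A x₀) := infDist_le_dist_of_mem hx₀
    _ = ‖A x - A x₀‖ := dist_eq_norm _ _
    _ ≤ M * ‖x - x₀‖ := hA2 x x₀
  calc ‖A x - y‖ ≤ d := hyd
    _ ≤ infDist (A x) (C 0 x₀) + (κ r * t + L * ‖x - x₀‖) := by linarith
    _ ≤ M * ‖x - x₀‖ + (κ r * t + L * ‖x - x₀‖) := by linarith
    _ = (M + L) * ‖x - x₀‖ + κ r * t := by ring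


end
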